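/- Let G be a group with finite generating set S and Cayley graph Γ. For every g ∈ G and s ∈ S ∪ S⁻¹ with |sg| = |g| + 1, the vertex set of the cone C(sg) equals the intersection of the vertex set of C(g) with the right translate C(s)·g = {kg : k a vertex of C(s)}; that is, C(sg) = C(g) ∩ C(s)·g. -/

import Mathlib

variable {G : Type*} [Group G]

noncomputable def wordLength (S : Set G) (g : G) : ℕ :=
  sInf {n | ∃ w : List G, (∀ x ∈ w, x ∈ S ∪ S⁻¹) ∧ w.length = n ∧ w.prod = g}

def cayley (S : Set G) : SimpleGraph G where
  Adj g h := g ≠ h ∧ h * g⁻¹ ∈ S ∪ S⁻¹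
  symm := ⟨by
    rintro g h ⟨hne, hmem⟩
    refine ⟨hne.symm, ?_⟩
    have key : g * h⁻¹ = (h * g⁻¹)⁻¹ := by group
    rw [key]
    rcases hmem with h1 | h1
    · exact Or.inr (by simpa [Set.mem_inv] using h1)
    · exact Or.inl (by simpa [Set.mem_inv] using h1)⟩
  loopless := ⟨fun g h => h.1 rfl⟩

def coneSet (S : Set G) (g : G) : Set G :=
  {h | wordLength S h = wordLength S g + (cayley S).dist g h}

lemma self_mem_coneSet (S : Set G) (g : G) : g ∈ coneSet S g := by
  simp [coneSet]

lemma mem_symm_inv (S : Set G) {x : G} (hx : x ∈ S ∪ S⁻¹) : x⁻¹ ∈ S ∪ S⁻¹ := by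
  rcases hx with h | h
  · exact Or.inr (by simpa [Set.mem_inv] using h)
  · exact Or.inl (by simpa [Set.mem_inv] using h)

lemma exists_word (S : Set G) (hgen : Subgroup.closure S = ⊤) (g : G) :
    ∃ w : List G, (∀ x ∈ w, x ∈ S ∪ S⁻¹) ∧ w.prod = g := by
  let H : Subgroup G :=
  { carrier := {g | ∃ w : List G, (∀ x ∈ w, x ∈ S ∪ S⁻¹) ∧ w.prod = g}
    one_mem' := ⟨[], by simp, by simp⟩
    mul_mem' := by
      rintro a b ⟨w1, h1, rfl⟩ ⟨w2, h2, rfl⟩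
      refine ⟨w1 ++ w2, ?_, by simp⟩
      intro x hx
      rcases List.mem_append.1 hx with h | h
      · exact h1 x h
      · exact h2 x h
    inv_mem' := by
      rintro a ⟨w, hw, rfl⟩
      refine ⟨(w.map fun x => x⁻¹).reverse, ?_, (List.prod_inv_reverse w).symm⟩
      intro x hx
      simp only [List.mem_reverse, List.mem_map] at hx
      obtain ⟨y, hy, rfl⟩ := hx
      exact mem_symm_inv S (hw y hy) }
  have hle : Subgroup.closure S ≤ H :=
    (Subgroup.closure_le H).2 (fun x hx => ⟨[x], by simp [Set.mem_union, hx], by simp⟩)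
  exact hle (hgen ▸ Subgroup.mem_top g)

lemma wordLength_le (S : Set G) {g : G} (w : List G)
    (hw : ∀ x ∈ w, x ∈ S ∪ S⁻¹) (hp : w.prod = g) :
    wordLength S g ≤ w.length := by
  unfold wordLength
  exact Nat.sInf_le ⟨w, hw, rfl, hp⟩

lemma wordLength_spec (S : Set G) (hgen : Subgroup.closure S = ⊤) (g : G) :
    ∃ w : List G, (∀ x ∈ w, x ∈ S ∪ S⁻¹) ∧ w.length = wordLength S g ∧ w.prod = g := by
  obtain ⟨w, hw, hp⟩ := exists_word S hgen g
  unfold wordLength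
  exact Nat.sInf_mem (⟨w.length, w, hw, rfl, hp⟩ :
    Set.Nonempty {n | ∃ w : List G, (∀ x ∈ w, x ∈ S ∪ S⁻¹) ∧ w.length = n ∧ w.prod = g})

lemma wordLength_mul_le (S : Set G) (hgen : Subgroup.closure S = ⊤) (a b : G) :
    wordLength S (a * b) ≤ wordLength S a + wordLength S b := by
  obtain ⟨w1, hw1, hl1, hp1⟩ := wordLength_spec S hgen a
  obtain ⟨w2, hw2, hl2, hp2⟩ := wordLength_spec S hgen b
  have := wordLength_le S (g := a * b) (w1 ++ w2)
    (by intro x hx; rcases List.mem_append.1 hx with h | h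
        exacts [hw1 x h, hw2 x h])
    (by simp [hp1, hp2])
  simpa [hl1, hl2] using this

lemma walk_of_word (S : Set G) (w : List G) (hw : ∀ x ∈ w, x ∈ S ∪ S⁻¹) :
    ∀ g h : G, w.prod * g = h → ∃ p : (cayley S).Walk g h, p.length ≤ w.length := by
  induction w with
  | nil =>
    intro g h hh
    simp only [List.prod_nil, one_mul] at hh
    subst hh
    exact ⟨SimpleGraph.Walk.nil, by simp⟩
  | cons a w ih =>
    intro g h hh
    obtain ⟨p, hp⟩ := ih (fun x hx => hw x (List.mem_cons_of_mem _ hx)) g (w.prod * g) rfl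
    rw [List.prod_cons, mul_assoc] at hh
    by_cases ha : a = 1
    · subst ha
      rw [one_mul] at hh
      subst hh
      exact ⟨p, hp.trans (by simp)⟩
    · have hne : w.prod * g ≠ h := by
        intro he
        apply ha
        rw [he] at hh
        exact mul_eq_right.mp hh
      have hadj : (cayley S).Adj (w.prod * g) h := by
        refine ⟨hne, ?_⟩
        have : h * (w.prod * g)⁻¹ = a := by rw [← hh]; group
        rw [this]
        exact hw a List.mem_cons_self
      exact ⟨p.concat hadj, by rw [SimpleGraph.Walk.length_concat]; simpa using hp⟩

lemma word_of_walk (S : Set G) : ∀ {g h : G} (p : (cayley S).Walk g h),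
    ∃ w : List G, (∀ x ∈ w, x ∈ S ∪ S⁻¹) ∧ w.length = p.length ∧ w.prod = h * g⁻¹ := by
  intro g h p
  induction p with
  | nil => exact ⟨[], by simp, by simp⟩
  | @cons g m h e p ih =>
    obtain ⟨w, hw, hl, hp⟩ := ih
    refine ⟨w ++ [m * g⁻¹], ?_, by simp [hl], ?_⟩
    · intro x hx
      rcases List.mem_append.1 hx with hx | hx
      · exact hw x hx
      · simp only [List.mem_singleton] at hx
        subst hx
        exact e.2
    · rw [List.prod_append, hp, List.prod_singleton]
      group

lemma dist_eq_wordLength (S : Set G) (hgen : Subgroup.closure S = ⊤) (g h : G) :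
    (cayley S).dist g h = wordLength S (h * g⁻¹) := by
  obtain ⟨w, hw, hl, hp⟩ := wordLength_spec S hgen (h * g⁻¹)
  obtain ⟨p, hplen⟩ := walk_of_word S w hw g h (by rw [hp]; group)
  have hreach : (cayley S).Reachable g h := ⟨p⟩
  have h1 : (cayley S).dist g h ≤ wordLength S (h * g⁻¹) :=
    (SimpleGraph.dist_le p).trans (hl ▸ hplen)
  have h2 : wordLength S (h * g⁻¹) ≤ (cayley S).dist g h := by
    obtain ⟨q, hq⟩ := hreach.exists_walk_length_eq_dist
    obtain ⟨w', hw', hl', hp'⟩ := word_of_walk S q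
    exact (wordLength_le S w' hw' hp').trans (by omega)
  omega

/-- For `s ∈ S ∪ S⁻¹` with `|sg| = |g| + 1`, the cone `C(sg)` is the intersection of the
cone `C(g)` with the right translate `C(s)·g`. -/
theorem cone_eq_inter_translate (S : Set G) (hS : S.Finite)
    (hgen : Subgroup.closure S = ⊤)
    (g s : G) (hs : s ∈ S ∪ S⁻¹) (hlen : wordLength S (s * g) = wordLength S g + 1) :
    coneSet S (s * g) = coneSet S g ∩ ((fun k => k * g) '' coneSet S s) := by
  have hs1 : wordLength S s = 1 := by
    have hle : wordLength S s ≤ 1 := wordLength_le S [s] (by simpa using hs) (by simp)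
    have hge : 1 ≤ wordLength S s := by
      have := wordLength_mul_le S hgen s g
      omega
    omega
  ext h
  simp only [coneSet, Set.mem_setOf_eq, Set.mem_inter_iff, Set.mem_image]
  rw [dist_eq_wordLength S hgen, dist_eq_wordLength S hgen]
  have key : h * (s * g)⁻¹ = (h * g⁻¹) * s⁻¹ := by group
  rw [key]
  constructor
  · intro hc
    have ht1 : wordLength S (h * g⁻¹) ≤ wordLength S (h * g⁻¹ * s⁻¹) + 1 := by
      have := wordLength_mul_le S hgen (h * g⁻¹ * s⁻¹) s
      have hx : h * g⁻¹ * s⁻¹ * s = h * g⁻¹ := by group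
      rw [hx] at this
      omega
    have ht2 : wordLength S h ≤ wordLength S (h * g⁻¹) + wordLength S g := by
      have := wordLength_mul_le S hgen (h * g⁻¹) g
      have hx : h * g⁻¹ * g = h := by group
      rw [hx] at this
      omega
    refine ⟨by omega, h * g⁻¹, ?_, by group⟩
    rw [dist_eq_wordLength S hgen, hs1]
    omega
  · rintro ⟨hc1, k, hk, hkg⟩
    have hk' : k = h * g⁻¹ := by
      have : k = h * g⁻¹ := by rw [← hkg]; group
      exact this
    subst hk'
    rw [dist_eq_wordLength S hgen, hs1] at hk
    omega
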